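/- Let 0 < v_1 < v_2 < … < v_k be reals and let M be the k×k matrix with M_{ij} = √( v_{min(i,j)} / v_{max(i,j)} ). Then every row sum of M⁻¹ is nonnegative: (M⁻¹ 𝟙)_j ≥ 0 for every j, where 𝟙 is the all-ones vector. Moreover all off-diagonal entries of M⁻¹ are nonpositive. -/

import Mathlib

namespace BGI
variable {k : ℕ}

noncomputable def W (v : Fin k → ℝ) (n : ℕ) : ℝ :=
  if h : 0 < n ∧ n ≤ k then Real.sqrt (v ⟨n - 1, by omega⟩) else 0
noncomputable def C (v : Fin k → ℝ) (n : ℕ) : ℝ :=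
  W v n * W v (n - 1) / ((W v n) ^ 2 - (W v (n - 1)) ^ 2)
noncomputable def D (v : Fin k → ℝ) (n : ℕ) : ℝ :=
  (W v n) ^ 2 * (1 / ((W v n) ^ 2 - (W v (n - 1)) ^ 2)
    + if n < k then 1 / ((W v (n + 1)) ^ 2 - (W v n) ^ 2) else 0)


section
variable (v : Fin k → ℝ)

lemma W_nonneg (n : ℕ) : 0 ≤ W v n := by
  unfold W; split_ifs; exacts [Real.sqrt_nonneg _, le_refl 0]

lemma W_zero : W v 0 = 0 := by unfold W; simp

lemma W_pos (hpos : ∀ i, 0 < v i) (n : ℕ) (h1 : 0 < n) (h2 : n ≤ k) : 0 < W v n := by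
  unfold W; rw [dif_pos ⟨h1, h2⟩]; exact Real.sqrt_pos.mpr (hpos _)

lemma W_lt (hpos : ∀ i, 0 < v i) (hmono : StrictMono v) (m n : ℕ) (hmn : m < n) (h2 : n ≤ k) : W v m < W v n := by
  rcases Nat.eq_zero_or_pos m with h | h
  · subst h; rw [W_zero]; exact W_pos v hpos n (by omega) h2
  · unfold W
    rw [dif_pos ⟨h, by omega⟩, dif_pos ⟨by omega, h2⟩]
    exact Real.sqrt_lt_sqrt (hpos _).le (hmono (by simp only [Fin.mk_lt_mk]; omega))

lemma delta_pos (hpos : ∀ i, 0 < v i) (hmono : StrictMono v) (n : ℕ) (h1 : 0 < n) (h2 : n ≤ k) :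
    0 < W v n ^ 2 - W v (n - 1) ^ 2 := by
  have h := W_lt v hpos hmono (n - 1) n (by omega) h2
  have h0 := W_nonneg v (n - 1)
  nlinarith

lemma add_two_sub_one (n : ℕ) : n + 2 - 1 = n + 1 := rfl

lemma hW1 (i : Fin k) : W v ((i : ℕ) + 1) = Real.sqrt (v i) := by
  unfold W; rw [dif_pos ⟨by omega, i.2⟩]
  exact congrArg Real.sqrt (congrArg v (by ext; simp))


end

noncomputable def N (v : Fin k → ℝ) : Matrix (Fin k) (Fin k) ℝ := fun i j =>
  if (i : ℕ) = (j : ℕ) then D v ((j : ℕ) + 1)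
  else if (i : ℕ) + 1 = (j : ℕ) then -C v ((j : ℕ) + 1)
  else if (j : ℕ) + 1 = (i : ℕ) then -C v ((i : ℕ) + 1) else 0

lemma N_symm (v : Fin k → ℝ) (i j : Fin k) : N v i j = N v j i := by
  unfold N
  rcases lt_trichotomy (i : ℕ) (j : ℕ) with h | h | h <;>
    · split_ifs <;> first | rfl | omega | (congr 1; omega)

lemma col_sum (v : Fin k → ℝ) (f : Fin k → ℝ) (j : Fin k) :
    ∑ l, f l * N v l j
      = f j * D v ((j : ℕ) + 1)
        - (if h : (j : ℕ) + 1 < k then f ⟨(j : ℕ) + 1, h⟩ * C v ((j : ℕ) + 2) else 0)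
        - (if h : 0 < (j : ℕ) then f ⟨(j : ℕ) - 1, by omega⟩ * C v ((j : ℕ) + 1) else 0) := by
  have key : ∀ l : Fin k, f l * N v l j =
      (if l = j then f j * D v ((j : ℕ) + 1) else 0)
      + (if (j : ℕ) + 1 = (l : ℕ) then -(f l * C v ((l : ℕ) + 1)) else 0)
      + (if (l : ℕ) + 1 = (j : ℕ) then -(f l * C v ((j : ℕ) + 1)) else 0) := by
    intro l
    unfold N
    rcases eq_or_ne l j with h | h
    · subst h; simp
    · have h' : (l : ℕ) ≠ (j : ℕ) := fun hc => h (Fin.ext hc)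
      split_ifs <;> first | omega | (simp_all; try ring)
  have h1 : (∑ l : Fin k, if (j : ℕ) + 1 = (l : ℕ) then -(f l * C v ((l : ℕ) + 1)) else 0)
      = -(if h : (j : ℕ) + 1 < k then f ⟨(j : ℕ) + 1, h⟩ * C v ((j : ℕ) + 2) else 0) := by
    by_cases h : (j : ℕ) + 1 < k
    · rw [dif_pos h]
      have he : ∀ l : Fin k, ((j : ℕ) + 1 = (l : ℕ)) ↔ l = (⟨(j : ℕ) + 1, h⟩ : Fin k) := by
        intro l; rw [Fin.ext_iff]; exact eq_comm
      rw [Finset.sum_congr rfl fun l _ => by rw [if_congr (he l) rfl rfl],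
        Finset.sum_ite_eq' Finset.univ]
      simp
    · rw [dif_neg h, Finset.sum_eq_zero fun l _ => by rw [if_neg]; have := l.2; omega]
      simp
  have h2 : (∑ l : Fin k, if (l : ℕ) + 1 = (j : ℕ) then -(f l * C v ((j : ℕ) + 1)) else 0)
      = -(if h : 0 < (j : ℕ) then f ⟨(j : ℕ) - 1, by omega⟩ * C v ((j : ℕ) + 1) else 0) := by
    by_cases h : 0 < (j : ℕ)
    · rw [dif_pos h]
      have he : ∀ l : Fin k, ((l : ℕ) + 1 = (j : ℕ)) ↔ l = (⟨(j : ℕ) - 1, by omega⟩ : Fin k) := by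
        intro l; rw [Fin.ext_iff]; simp; omega
      rw [Finset.sum_congr rfl fun l _ => by rw [if_congr (he l) rfl rfl],
        Finset.sum_ite_eq' Finset.univ]
      simp
    · rw [dif_neg h, Finset.sum_eq_zero fun l _ => by rw [if_neg]; omega]
      simp
  rw [Finset.sum_congr rfl fun l _ => key l, Finset.sum_add_distrib,
    Finset.sum_add_distrib, Finset.sum_ite_eq' Finset.univ j, h1, h2]
  simp only [Finset.mem_univ, if_true]
  ring
lemma mul_N (v : Fin k → ℝ) (hpos : ∀ i, 0 < v i) (hmono : StrictMono v)
    (M : Matrix (Fin k) (Fin k) ℝ)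
    (hM : ∀ i j, M i j = Real.sqrt (v (min i j) / v (max i j))) :
    M * N v = 1 := by
  have hMle : ∀ i j : Fin k, i ≤ j → M i j = W v ((i : ℕ) + 1) / W v ((j : ℕ) + 1) := by
    intro i j hij
    rw [hM, min_eq_left hij, max_eq_right hij, Real.sqrt_div (hpos i).le, hW1, hW1]
  have hMge : ∀ i j : Fin k, j ≤ i → M i j = W v ((j : ℕ) + 1) / W v ((i : ℕ) + 1) := by
    intro i j hij
    rw [hM, min_eq_right hij, max_eq_left hij, Real.sqrt_div (hpos j).le, hW1, hW1]
  ext i j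
  rw [Matrix.mul_apply, col_sum, Matrix.one_apply]
  rcases lt_trichotomy (i : ℕ) (j : ℕ) with hab | hab | hab
  · -- a < b : goal 0
    have hne : i ≠ j := fun h => by rw [h] at hab; exact lt_irrefl _ hab
    rw [if_neg hne]
    have hb : 0 < (j : ℕ) := by omega
    rw [dif_pos hb]
    have e1 : M i j = W v ((i : ℕ) + 1) / W v ((j : ℕ) + 1) :=
      hMle i j (Fin.le_def.mpr hab.le)
    have e2 : M i ⟨(j : ℕ) - 1, by omega⟩ = W v ((i : ℕ) + 1) / W v ((j : ℕ)) := by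
      rw [hMle i _ (Fin.le_def.mpr (by simp; try omega))]
      congr 2
      simp; try omega
    have hWb : W v (j : ℕ) ≠ 0 := (W_pos v hpos _ hb (by omega)).ne'
    have hWb1 : W v ((j : ℕ) + 1) ≠ 0 := (W_pos v hpos _ (by omega) (by omega)).ne'
    have hD1 : W v ((j : ℕ) + 1) ^ 2 - W v (j : ℕ) ^ 2 ≠ 0 := by
      have := delta_pos v hpos hmono ((j : ℕ) + 1) (by omega) (by omega); simpa using this.ne'
    by_cases hk : (j : ℕ) + 1 < k
    · rw [dif_pos hk]
      have e3 : M i ⟨(j : ℕ) + 1, hk⟩ = W v ((i : ℕ) + 1) / W v ((j : ℕ) + 2) :=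
        hMle i _ (Fin.le_def.mpr (by simp; try omega))
      have hWb2 : W v ((j : ℕ) + 2) ≠ 0 := (W_pos v hpos _ (by omega) (by omega)).ne'
      have hD2 : W v ((j : ℕ) + 2) ^ 2 - W v ((j : ℕ) + 1) ^ 2 ≠ 0 := by
        have := delta_pos v hpos hmono ((j : ℕ) + 2) (by omega) (by omega); simpa using this.ne'
      rw [e1, e2, e3]
      show _ * D v ((j : ℕ) + 1) - _ * C v ((j : ℕ) + 2) - _ * C v ((j : ℕ) + 1) = 0
      unfold C D
      simp only [if_pos hk, add_two_sub_one, Nat.add_sub_cancel]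
      field_simp
      try ring
    · rw [dif_neg hk]
      rw [e1, e2]
      unfold C D
      simp only [if_neg hk, Nat.add_sub_cancel]
      field_simp
      try ring
  · -- a = b : goal 1
    have heq : i = j := Fin.ext hab
    subst heq
    rw [if_pos rfl]
    have e1 : M i i = W v ((i : ℕ) + 1) / W v ((i : ℕ) + 1) := hMle i i le_rfl
    have hWb1 : W v ((i : ℕ) + 1) ≠ 0 := (W_pos v hpos _ (by omega) (by exact i.2)).ne'
    have hD1 : W v ((i : ℕ) + 1) ^ 2 - W v (i : ℕ) ^ 2 ≠ 0 := by
      have := delta_pos v hpos hmono ((i : ℕ) + 1) (by omega) i.2; simpa using this.ne'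
    by_cases hb : 0 < (i : ℕ)
    · rw [dif_pos hb]
      have e2 : M i ⟨(i : ℕ) - 1, by omega⟩ = W v ((i : ℕ)) / W v ((i : ℕ) + 1) := by
        rw [hMge i _ (Fin.le_def.mpr (by simp; try omega))]
        congr 2
        simp; try omega
      have hWb : W v (i : ℕ) ≠ 0 := (W_pos v hpos _ hb (by omega)).ne'
      by_cases hk : (i : ℕ) + 1 < k
      · rw [dif_pos hk]
        have e3 : M i ⟨(i : ℕ) + 1, hk⟩ = W v ((i : ℕ) + 1) / W v ((i : ℕ) + 2) :=
          hMle i _ (Fin.le_def.mpr (by simp))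
        have hWb2 : W v ((i : ℕ) + 2) ≠ 0 := (W_pos v hpos _ (by omega) (by omega)).ne'
        have hD2 : W v ((i : ℕ) + 2) ^ 2 - W v ((i : ℕ) + 1) ^ 2 ≠ 0 := by
          have := delta_pos v hpos hmono ((i : ℕ) + 2) (by omega) (by omega); simpa using this.ne'
        rw [e1, e2, e3]
        unfold C D
        simp only [if_pos hk, add_two_sub_one, Nat.add_sub_cancel]
        field_simp
        try ring
      · rw [dif_neg hk]
        rw [e1, e2]
        unfold C D
        simp only [if_neg hk, Nat.add_sub_cancel]
        field_simp
        try ring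
    · rw [dif_neg hb]
      have hb0 : (i : ℕ) = 0 := by omega
      by_cases hk : (i : ℕ) + 1 < k
      · rw [dif_pos hk]
        have e3 : M i ⟨(i : ℕ) + 1, hk⟩ = W v ((i : ℕ) + 1) / W v ((i : ℕ) + 2) :=
          hMle i _ (Fin.le_def.mpr (by simp))
        have hWb2 : W v ((i : ℕ) + 2) ≠ 0 := (W_pos v hpos _ (by omega) (by omega)).ne'
        have hD2 : W v ((i : ℕ) + 2) ^ 2 - W v ((i : ℕ) + 1) ^ 2 ≠ 0 := by
          have := delta_pos v hpos hmono ((i : ℕ) + 2) (by omega) (by omega); simpa using this.ne'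
        have hW0sq : W v ((i : ℕ)) ^ 2 = 0 := by rw [hb0, W_zero]; ring
        rw [e1, e3]
        unfold C D
        simp only [if_pos hk, add_two_sub_one, Nat.add_sub_cancel, hW0sq, sub_zero]
        field_simp
        try ring
      · rw [dif_neg hk]
        have hW0sq : W v ((i : ℕ)) ^ 2 = 0 := by rw [hb0, W_zero]; ring
        rw [e1]
        unfold D
        simp only [if_neg hk, Nat.add_sub_cancel, hW0sq, sub_zero]
        field_simp
        ring
  · -- a > b : goal 0
    have hne : i ≠ j := fun h => by rw [h] at hab; exact lt_irrefl _ hab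
    rw [if_neg hne]
    have hk : (j : ℕ) + 1 < k := lt_of_le_of_lt (by omega) i.2
    rw [dif_pos hk]
    have e1 : M i j = W v ((j : ℕ) + 1) / W v ((i : ℕ) + 1) :=
      hMge i j (Fin.le_def.mpr hab.le)
    have e3 : M i ⟨(j : ℕ) + 1, hk⟩ = W v ((j : ℕ) + 2) / W v ((i : ℕ) + 1) :=
      hMge i _ (Fin.le_def.mpr (by simp; try omega))
    have hWa : W v ((i : ℕ) + 1) ≠ 0 := (W_pos v hpos _ (by omega) i.2).ne'
    have hWb1 : W v ((j : ℕ) + 1) ≠ 0 := (W_pos v hpos _ (by omega) (by omega)).ne'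
    have hWb2 : W v ((j : ℕ) + 2) ≠ 0 := (W_pos v hpos _ (by omega) (by omega)).ne'
    have hD1 : W v ((j : ℕ) + 1) ^ 2 - W v (j : ℕ) ^ 2 ≠ 0 := by
      have := delta_pos v hpos hmono ((j : ℕ) + 1) (by omega) (by omega); simpa using this.ne'
    have hD2 : W v ((j : ℕ) + 2) ^ 2 - W v ((j : ℕ) + 1) ^ 2 ≠ 0 := by
      have := delta_pos v hpos hmono ((j : ℕ) + 2) (by omega) (by omega); simpa using this.ne'
    by_cases hb : 0 < (j : ℕ)
    · rw [dif_pos hb]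
      have e2 : M i ⟨(j : ℕ) - 1, by omega⟩ = W v ((j : ℕ)) / W v ((i : ℕ) + 1) := by
        rw [hMge i _ (Fin.le_def.mpr (by simp; try omega))]
        congr 2
        simp; try omega
      have hWb : W v (j : ℕ) ≠ 0 := (W_pos v hpos _ hb (by omega)).ne'
      rw [e1, e2, e3]
      unfold C D
      simp only [if_pos hk, add_two_sub_one, Nat.add_sub_cancel]
      field_simp
      try ring
    · rw [dif_neg hb]
      have hb0 : (j : ℕ) = 0 := by omega
      have hW0sq : W v ((j : ℕ)) ^ 2 = 0 := by rw [hb0, W_zero]; ring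
      rw [e1, e3]
      unfold C D
      simp only [if_pos hk, add_two_sub_one, Nat.add_sub_cancel, hW0sq, sub_zero]
      field_simp
      try ring
end BGI

open BGI

/-- Key step in the proof of Theorem 3 (Appendix A.2): for the normalized Brownian-motion
correlation matrix `M_{ij} = √(v_{min(i,j)}/v_{max(i,j)})` with `0 < v_1 < … < v_k`,
every row sum of `M⁻¹` is nonnegative and all off-diagonal entries of `M⁻¹` are nonpositive. -/
theorem brownian_gram_inverse_diagonally_dominant
    (k : ℕ) (v : Fin k → ℝ) (hpos : ∀ i, 0 < v i) (hmono : StrictMono v)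
    (M : Matrix (Fin k) (Fin k) ℝ)
    (hM : ∀ i j, M i j = Real.sqrt (v (min i j) / v (max i j))) :
    (∀ j, 0 ≤ M⁻¹.mulVec (fun _ => 1) j) ∧
      (∀ i j, i ≠ j → M⁻¹ i j ≤ 0) := by
  have hinv : M⁻¹ = N v := Matrix.inv_eq_right_inv (mul_N v hpos hmono M hM)
  have hCnonneg : ∀ n : ℕ, 0 < n → n ≤ k → 0 ≤ C v n := fun n h1 h2 =>
    div_nonneg (mul_nonneg (W_nonneg v n) (W_nonneg v (n - 1)))
      (delta_pos v hpos hmono n h1 h2).le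
  constructor
  · intro j
    have h0 : M⁻¹.mulVec (fun _ => 1) j = ∑ l, (fun _ => (1 : ℝ)) l * N v l j := by
      rw [hinv]
      simp only [Matrix.mulVec, dotProduct, mul_one, one_mul]
      exact Finset.sum_congr rfl fun l _ => N_symm v j l
    rw [h0, col_sum]
    simp only [one_mul]
    have hbk : (j : ℕ) < k := j.2
    have hC1 : (if h : 0 < (j : ℕ) then C v ((j : ℕ) + 1) else 0) = C v ((j : ℕ) + 1) := by
      split_ifs with h
      · rfl
      · have hb0 : (j : ℕ) = 0 := by omega
        simp [C, hb0, W_zero]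
    rw [hC1]
    have hWb1 : 0 < W v ((j : ℕ) + 1) := W_pos v hpos _ (by omega) (by omega)
    have hWbn : 0 ≤ W v (j : ℕ) := W_nonneg v _
    have hD1 : (0:ℝ) < W v ((j : ℕ) + 1) ^ 2 - W v (j : ℕ) ^ 2 := by
      have := delta_pos v hpos hmono ((j : ℕ) + 1) (by omega) (by omega); simpa using this
    by_cases hk : (j : ℕ) + 1 < k
    · rw [dif_pos hk]
      have hWb2 : 0 < W v ((j : ℕ) + 2) := W_pos v hpos _ (by omega) (by omega)
      have hD2 : (0:ℝ) < W v ((j : ℕ) + 2) ^ 2 - W v ((j : ℕ) + 1) ^ 2 := by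
        have := delta_pos v hpos hmono ((j : ℕ) + 2) (by omega) (by omega); simpa using this
      have hlt : W v (j : ℕ) < W v ((j : ℕ) + 2) :=
        W_lt v hpos hmono _ _ (by omega) (by omega)
      have key : D v ((j : ℕ) + 1) - C v ((j : ℕ) + 2) - C v ((j : ℕ) + 1)
          = W v ((j : ℕ) + 1) / (W v ((j : ℕ) + 1) + W v (j : ℕ))
            - W v ((j : ℕ) + 1) / (W v ((j : ℕ) + 2) + W v ((j : ℕ) + 1)) := by
        unfold C D
        simp only [if_pos hk, add_two_sub_one, Nat.add_sub_cancel]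
        have hs1 : W v ((j : ℕ) + 1) + W v (j : ℕ) ≠ 0 := by positivity
        have hs2 : W v ((j : ℕ) + 2) + W v ((j : ℕ) + 1) ≠ 0 := by positivity
        field_simp
        ring
      rw [key]
      apply sub_nonneg.mpr
      rw [div_le_div_iff_of_pos_left hWb1 (by positivity) (by positivity)]
      linarith
    · rw [dif_neg hk]
      have hle : W v (j : ℕ) ≤ W v ((j : ℕ) + 1) :=
        (W_lt v hpos hmono _ _ (by omega) (by omega)).le
      have key : D v ((j : ℕ) + 1) - 0 - C v ((j : ℕ) + 1)
          = W v ((j : ℕ) + 1) * (W v ((j : ℕ) + 1) - W v (j : ℕ))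
            / (W v ((j : ℕ) + 1) ^ 2 - W v (j : ℕ) ^ 2) := by
        unfold C D
        simp only [if_neg hk, Nat.add_sub_cancel]
        field_simp
        ring
      rw [key]
      apply div_nonneg _ hD1.le
      nlinarith
  · intro i j hne
    rw [hinv]
    show N v i j ≤ 0
    unfold N
    split_ifs with h1 h2 h3
    · exact absurd (Fin.ext h1) hne
    · exact neg_nonpos.mpr (hCnonneg _ (by omega) j.2)
    · exact neg_nonpos.mpr (hCnonneg _ (by omega) i.2)
    · exact le_refl 0
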